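/- Let M be a d×m real matrix with unit-norm columns x_1,…,x_m, D a diagonal m×m matrix with nonnegative diagonal entries summing to 1, and let v be in the span of eigenvectors of M D Mᵀ with eigenvalue at least L > 0. If every column satisfies |⟨x_j,h⟩| ≤ τ for a unit vector h, then |⟨v,h⟩| ≤ (τ/L)·‖v‖. -/

import Mathlib

open scoped RealInnerProductSpace BigOperators
open Matrix

/-- Let `M` be a `d × m` matrix with unit-norm columns, `D` a nonnegative
diagonal matrix with trace `1`, and let `v` lie in the span of eigenvectors of `M D Mᵀ`
with eigenvalue at least `L > 0`. If every column of `M` has margin at most `τ` with a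
unit vector `h`, then `|⟪v,h⟫| ≤ (τ/L)·‖v‖`. -/
theorem stmt_8 (d m : ℕ) (M : Matrix (Fin d) (Fin m) ℝ) (Dg : Fin m → ℝ)
    (hD0 : ∀ j, 0 ≤ Dg j) (hD1 : ∑ j, Dg j = 1)
    (hcol : ∀ j, ∑ i, (M i j) ^ 2 = 1)
    (h : EuclideanSpace ℝ (Fin d)) (hh : ‖h‖ = 1)
    (τ L : ℝ) (hτ : 0 ≤ τ) (hL : 0 < L)
    (hmar : ∀ j, |∑ i, M i j * h i| ≤ τ)
    (v : EuclideanSpace ℝ (Fin d))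
    (hv : v ∈ ⨆ (lam : ℝ) (_ : L ≤ lam),
      Module.End.eigenspace
        (Matrix.toEuclideanLin (M * Matrix.diagonal Dg * Mᵀ)) lam) :
    |⟪v, h⟫| ≤ (τ / L) * ‖v‖ := by
  classical
  set A : Matrix (Fin d) (Fin d) ℝ := M * Matrix.diagonal Dg * Mᵀ with hAdef
  set T : EuclideanSpace ℝ (Fin d) →ₗ[ℝ] EuclideanSpace ℝ (Fin d) :=
    Matrix.toEuclideanLin A with hTdef
  have hAh : A.IsHermitian := by
    rw [Matrix.IsHermitian, Matrix.conjTranspose_eq_transpose_of_trivial, hAdef,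
      Matrix.transpose_mul, Matrix.transpose_mul, Matrix.transpose_transpose,
      Matrix.diagonal_transpose, Matrix.mul_assoc]
  have hTsym : LinearMap.IsSymmetric T := Matrix.isHermitian_iff_isSymmetric.mp hAh
  have hd : Module.finrank ℝ (EuclideanSpace ℝ (Fin d)) = d := finrank_euclideanSpace_fin
  set b := hTsym.eigenvectorBasis hd with hbdef
  set μ := hTsym.eigenvalues hd with hμdef
  have hb : ∀ i, T (b i) = μ i • b i := by
    intro i
    exact hTsym.apply_eigenvectorBasis hd i
  -- eigencoordinates with small eigenvalues vanish
  have hzero : ∀ i, μ i < L → ⟪b i, v⟫ = 0 := by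
    intro i hi
    refine Submodule.iSup_induction (motive := fun u => ⟪b i, u⟫ = 0) _ hv ?_ ?_ ?_
    · intro lam u hu
      by_cases hlam : L ≤ lam
      · rw [iSup_pos hlam] at hu
        have hTu : T u = lam • u := Module.End.mem_eigenspace_iff.mp hu
        have h1 : ⟪b i, T u⟫ = lam * ⟪b i, u⟫ := by
          rw [hTu, real_inner_smul_right]
        have h2 : ⟪b i, T u⟫ = μ i * ⟪b i, u⟫ := by
          rw [← hTsym (b i) u, hb i, real_inner_smul_left]
        have hne : lam - μ i ≠ 0 := by
          have : μ i < lam := lt_of_lt_of_le hi hlam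
          linarith
        have : (lam - μ i) * ⟪b i, u⟫ = 0 := by
          rw [sub_mul, ← h1, ← h2]; ring
        exact (mul_eq_zero.mp this).resolve_left hne
      · rw [iSup_neg hlam] at hu
        rw [(Submodule.mem_bot ℝ).mp hu, inner_zero_right]
    · simp
    · intro x y hx hy
      rw [inner_add_right, hx, hy, add_zero]
  set c : Fin d → ℝ := fun i => ⟪b i, v⟫ with hcdef
  set co : Fin d → ℝ := fun i => if L ≤ μ i then c i / μ i else 0 with hcodef
  set w : EuclideanSpace ℝ (Fin d) := ∑ i, co i • b i with hwdef
  have hbw : ∀ i, ⟪b i, w⟫ = co i := by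
    intro i
    rw [hwdef, inner_sum]
    simp_rw [real_inner_smul_right]
    rw [Finset.sum_eq_single i]
    · rw [real_inner_self_eq_norm_sq, b.orthonormal.1 i]; simp
    · intro j _ hj
      rw [b.orthonormal.2 (Ne.symm hj), mul_zero]
    · simp
  have hTw : T w = v := by
    rw [hwdef, map_sum]
    simp_rw [_root_.map_smul, hb, smul_smul]
    rw [← b.sum_repr' v]
    refine Finset.sum_congr rfl fun i _ => ?_
    by_cases hi : L ≤ μ i
    · have hμne : μ i ≠ 0 := ne_of_gt (lt_of_lt_of_le hL hi)
      rw [hcodef]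
      simp only [hi, if_true]
      rw [div_mul_cancel₀ _ hμne]
    · rw [hcodef]
      simp only [hi, if_false, zero_mul, zero_smul]
      rw [hzero i (not_le.mp hi)]
      simp
  -- norms via eigencoordinates
  have hnorm : ∀ u : EuclideanSpace ℝ (Fin d), ‖u‖ = Real.sqrt (∑ i, ⟪b i, u⟫ ^ 2) := by
    intro u
    rw [← b.repr.norm_map u, EuclideanSpace.norm_eq]
    congr 1
    refine Finset.sum_congr rfl fun i _ => ?_
    rw [b.repr_apply_apply, Real.norm_eq_abs, sq_abs]
  have hwnorm : ‖w‖ ≤ ‖v‖ / L := by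
    rw [hnorm w, hnorm v]
    simp_rw [hbw]
    have hterm : ∀ i, co i ^ 2 ≤ c i ^ 2 / L ^ 2 := by
      intro i
      rw [hcodef]
      by_cases hi : L ≤ μ i
      · simp only [hi, if_true, div_pow]
        have hLμ : L ^ 2 ≤ μ i ^ 2 := by nlinarith
        have hL2 : (0:ℝ) < L ^ 2 := by positivity
        exact div_le_div_of_nonneg_left (sq_nonneg _) hL2 hLμ
      · simp only [hi, if_false]
        norm_num
        positivity
    calc Real.sqrt (∑ i, co i ^ 2) ≤ Real.sqrt (∑ i, c i ^ 2 / L ^ 2) := by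
          apply Real.sqrt_le_sqrt
          exact Finset.sum_le_sum fun i _ => hterm i
      _ = Real.sqrt (∑ i, c i ^ 2) / L := by
          rw [← Finset.sum_div, Real.sqrt_div (by positivity), Real.sqrt_sq hL.le]
  -- the key inner product expansion
  have hwfun := (WithLp.equiv 2 (Fin d → ℝ)) w
  have key : ⟪T w, h⟫ = ∑ j, Dg j * ((∑ k, M k j * w k) * (∑ i, M i j * h i)) := by
    have h1 : ⟪T w, h⟫ = (A *ᵥ (fun k => w k)) ⬝ᵥ (fun i => h i) := by
      rw [hTdef]
      simp [Matrix.toEuclideanLin_apply, PiLp.inner_apply, RCLike.inner_apply, conj_trivial,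
        dotProduct]
      exact Finset.sum_congr rfl fun i _ => mul_comm _ _
    rw [h1, hAdef, ← Matrix.mulVec_mulVec, ← Matrix.mulVec_mulVec,
      dotProduct_comm, Matrix.dotProduct_mulVec, ← Matrix.mulVec_transpose,
      dotProduct_comm]
    simp_rw [dotProduct, Matrix.mulVec_diagonal]
    refine Finset.sum_congr rfl fun j _ => ?_
    simp [Matrix.mulVec, dotProduct, Matrix.transpose_apply]
    ring
  -- columns as Euclidean vectors
  have hcolnorm : ∀ j, ‖(WithLp.equiv 2 (Fin d → ℝ)).symm (fun i => M i j)‖ = 1 := by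
    intro j
    rw [EuclideanSpace.norm_eq]
    have : ∀ i, ‖(WithLp.equiv 2 (Fin d → ℝ)).symm (fun i => M i j) i‖ ^ 2 = (M i j) ^ 2 := by
      intro i
      rw [Real.norm_eq_abs, sq_abs]
      rfl
    simp_rw [this, hcol j, Real.sqrt_one]
  have hcw : ∀ j, |∑ k, M k j * w k| ≤ ‖w‖ := by
    intro j
    have : (∑ k, M k j * w k) = ⟪(WithLp.equiv 2 (Fin d → ℝ)).symm (fun i => M i j), w⟫ := by
      rw [PiLp.inner_apply]
      simp [RCLike.inner_apply, conj_trivial]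
      exact Finset.sum_congr rfl fun i _ => mul_comm _ _
    rw [this]
    calc |⟪(WithLp.equiv 2 (Fin d → ℝ)).symm (fun i => M i j), w⟫|
        ≤ ‖(WithLp.equiv 2 (Fin d → ℝ)).symm (fun i => M i j)‖ * ‖w‖ := abs_real_inner_le_norm _ _
      _ = ‖w‖ := by rw [hcolnorm j, one_mul]
  -- put everything together
  have hbound : |⟪v, h⟫| ≤ τ * ‖w‖ := by
    rw [← hTw, key]
    calc |∑ j, Dg j * ((∑ k, M k j * w k) * (∑ i, M i j * h i))|
        ≤ ∑ j, |Dg j * ((∑ k, M k j * w k) * (∑ i, M i j * h i))| :=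
          Finset.abs_sum_le_sum_abs _ _
      _ ≤ ∑ j, Dg j * (‖w‖ * τ) := by
          refine Finset.sum_le_sum fun j _ => ?_
          rw [abs_mul, abs_mul, abs_of_nonneg (hD0 j)]
          exact mul_le_mul_of_nonneg_left
            (mul_le_mul (hcw j) (hmar j) (abs_nonneg _) (norm_nonneg w)) (hD0 j)
      _ = ‖w‖ * τ := by rw [← Finset.sum_mul, hD1, one_mul]
      _ = τ * ‖w‖ := mul_comm _ _
  calc |⟪v, h⟫| ≤ τ * ‖w‖ := hbound
    _ ≤ τ * (‖v‖ / L) := by exact mul_le_mul_of_nonneg_left hwnorm hτ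
    _ = (τ / L) * ‖v‖ := by ring
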